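/- Let λ be an infinite cardinal and let u₁, u₂ be subsets of λ⁺. If h is a lawful bijection from u₁ onto u₂ (i.e. h is injective and h(α) + λ = α + λ in ordinal arithmetic for every α ∈ u₁), then ι(u₂) = ι(u₁). -/

import Mathlib

open Cardinal

/-- `ι(A)`: the least ordinal `δ` divisible by `λ` (i.e. `δ = λ·ξ` for some `ξ`)
with `A ⊆ δ`. -/
noncomputable def iotaOf (lam : Cardinal) (A : Set Ordinal) : Ordinal :=
  sInf {δ : Ordinal | (∀ a ∈ A, a < δ) ∧ lam.ord ∣ δ}

/-- Key: for `δ` divisible by `λ`, `α < δ ↔ α + λ ≤ δ`. -/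
lemma lt_iff_add_le_of_dvd {lam : Cardinal} (hlam : Cardinal.aleph0 ≤ lam)
    {δ α : Ordinal} (hd : lam.ord ∣ δ) : α < δ ↔ α + lam.ord ≤ δ := by
  have hpos : (0 : Ordinal) < lam.ord := by
    rw [Cardinal.lt_ord]; simpa using lt_of_lt_of_le Cardinal.aleph0_pos hlam
  constructor
  · intro hαδ
    obtain ⟨ξ, rfl⟩ := hd
    have hq : α / lam.ord < ξ := (Ordinal.div_lt hpos.ne').2 hαδ
    have habs : α % lam.ord + lam.ord = lam.ord :=
      Ordinal.principal_add_iff_add_left_eq_self.1 (Ordinal.isPrincipal_add_ord hlam) _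
        (Ordinal.mod_lt α hpos.ne')
    calc α + lam.ord = lam.ord * (α / lam.ord) + α % lam.ord + lam.ord := by
            rw [Ordinal.div_add_mod]
      _ = lam.ord * (α / lam.ord) + lam.ord := by rw [add_assoc, habs]
      _ = lam.ord * (α / lam.ord + 1) := by rw [mul_add_one]
      _ ≤ lam.ord * ξ := by
            apply mul_le_mul_right
            rwa [← Order.succ_le_iff] at hq
  · intro hle
    exact lt_of_lt_of_le (lt_add_of_pos_right α hpos) hle

/-- If `λ` is an infinite cardinal, `u₁, u₂ ⊆ λ⁺`, and `h` is a lawful bijection from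
`u₁` onto `u₂` (injective, with `h(α) + λ = α + λ` for all `α ∈ u₁`), then
`ι(u₂) = ι(u₁)`. -/
theorem iota_eq_of_lawful (lam : Cardinal) (hlam : Cardinal.aleph0 ≤ lam)
    (u₁ u₂ : Set Ordinal)
    (hu₁ : ∀ α ∈ u₁, α < (Order.succ lam).ord)
    (hu₂ : ∀ α ∈ u₂, α < (Order.succ lam).ord)
    (h : Ordinal → Ordinal)
    (hmap : ∀ α ∈ u₁, h α ∈ u₂)
    (hinj : Set.InjOn h u₁)
    (hsurj : ∀ β ∈ u₂, ∃ α ∈ u₁, h α = β)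
    (hlawful : ∀ α ∈ u₁, h α + lam.ord = α + lam.ord) :
    iotaOf lam u₂ = iotaOf lam u₁ := by
  unfold iotaOf
  congr 1
  ext δ
  simp only [Set.mem_setOf_eq, and_congr_left_iff]
  intro hd
  constructor
  · intro H a ha
    rw [lt_iff_add_le_of_dvd hlam hd, ← hlawful a ha,
      ← lt_iff_add_le_of_dvd hlam hd]
    exact H _ (hmap a ha)
  · intro H b hb
    obtain ⟨a, ha, rfl⟩ := hsurj b hb
    rw [lt_iff_add_le_of_dvd hlam hd, hlawful a ha,
      ← lt_iff_add_le_of_dvd hlam hd]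
    exact H a ha
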